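/- Let λ be an infinite cardinal, U a λ-regular ultrafilter on λ, and let M₀, M₁ be elementarily equivalent structures in a countable language L. Then the ultrapower M₀^λ/U is λ⁺-saturated if and only if M₁^λ/U is λ⁺-saturated. (Keisler's theorem: λ⁺-saturation of regular ultrapowers depends only on the theory of the model.) -/

import Mathlib

open FirstOrder

universe u

namespace KeislerAux

open FirstOrder.Language

variable {L : FirstOrder.Language.{u, u}}

/-- `∃x. ⋀_{k ∈ t} ψ k`, quantifying the `Unit` variable. -/
noncomputable def exChi {ι β : Type u} (ψ : ι → L.Formula (β ⊕ Unit)) (t : Finset ι) :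
    L.Formula β :=
  Formula.iExs Unit (Formula.iInf fun k : t => ψ k)

lemma realize_exChi {ι β : Type u} {M : Type u} [L.Structure M] (ψ : ι → L.Formula (β ⊕ Unit))
    (t : Finset ι) (w : β → M) :
    (exChi ψ t).Realize w ↔ ∃ x : M, ∀ k ∈ t, (ψ k).Realize (Sum.elim w fun _ => x) := by
  rw [exChi, Formula.realize_iExs]
  constructor
  · rintro ⟨i, hi⟩
    refine ⟨i (), ?_⟩
    have : Sum.elim w i = Sum.elim w (fun _ => i ()) := by
      funext a; cases a with
      | inl a => rfl
      | inr a => cases a; rfl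
    rw [this] at hi
    intro k hk
    exact (Formula.realize_iInf.1 hi) ⟨k, hk⟩
  · rintro ⟨x, hx⟩
    refine ⟨fun _ => x, ?_⟩
    exact Formula.realize_iInf.2 fun k => hx k k.2

/-- The existential closure of a formula, as a sentence. -/
noncomputable def exClosure {β : Type u} [DecidableEq β] (Θ : L.Formula β) : L.Sentence :=
  Θ.exClosure

lemma realize_exClosure {β : Type u} [DecidableEq β] {M : Type u} [L.Structure M] [Nonempty M]
    (Θ : L.Formula β) : M ⊨ exClosure Θ ↔ ∃ v : β → M, Θ.Realize v := by
  rw [exClosure, Formula.realize_exClosure]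
  have key : ∀ (v : β → M),
      Formula.Realize (Θ.restrictFreeVar id) (fun b : ↥Θ.freeVarFinset => v b) ↔ Θ.Realize v := by
    intro v
    exact BoundedFormula.realize_restrictFreeVar (φ := Θ) (f := id)
        (v := fun b : ↥Θ.freeVarFinset => v b) (xs := default) v (fun a => rfl)
  constructor
  · rintro ⟨i, hi⟩
    refine ⟨fun b => if hb : b ∈ Θ.freeVarFinset then i ⟨b, hb⟩ else Classical.arbitrary M, ?_⟩
    rw [← key]
    convert hi using 2 with b
    simp
  · rintro ⟨v, hv⟩
    exact ⟨fun b => v b, (key v).2 hv⟩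

/-- Transfer of existentially closed formulas along elementary equivalence. -/
lemma exists_realize_iff {β : Type u} {M₀ M₁ : Type u} [L.Structure M₀] [L.Structure M₁]
    [Nonempty M₀] [Nonempty M₁] (h : M₀ ≅[L] M₁) (Θ : L.Formula β) :
    (∃ v : β → M₀, Θ.Realize v) ↔ ∃ v : β → M₁, Θ.Realize v := by
  classical
  rw [← realize_exClosure Θ, ← realize_exClosure Θ]
  exact h.realize_sentence _

/-- The formula expressing which subsets `t ⊆ s` of a finite family are jointly satisfiable. -/
noncomputable def patternFormula {ι β : Type u} (ψ : ι → L.Formula (β ⊕ Unit)) (s : Finset ι)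
    (P : Finset ι → Prop) [DecidablePred P] : L.Formula β :=
  BoundedFormula.iInf fun t : s.powerset => if P t then exChi ψ t else ∼(exChi ψ t)

lemma realize_patternFormula {ι β : Type u} {M : Type u} [L.Structure M]
    (ψ : ι → L.Formula (β ⊕ Unit)) (s : Finset ι) (P : Finset ι → Prop) [DecidablePred P]
    (w : β → M) :
    (patternFormula ψ s P).Realize w ↔
      ∀ t ∈ s.powerset,
        ((∃ x : M, ∀ k ∈ t, (ψ k).Realize (Sum.elim w fun _ => x)) ↔ P t) := by
  have base : (patternFormula ψ s P).Realize w =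
      BoundedFormula.Realize (patternFormula ψ s P) w default := rfl
  rw [base, patternFormula, BoundedFormula.realize_iInf]
  refine Subtype.forall.trans (forall₂_congr fun t ht => ?_)
  show BoundedFormula.Realize (if P t then exChi ψ t else ∼(exChi ψ t)) w default ↔ _
  have hchi : BoundedFormula.Realize (exChi ψ t) w default ↔
      ∃ x : M, ∀ k ∈ t, (ψ k).Realize (Sum.elim w fun _ => x) := realize_exChi ψ t w
  by_cases hP : P t
  · rw [if_pos hP]
    exact hchi.trans (by simp [hP])
  · rw [if_neg hP, BoundedFormula.realize_not]
    exact (not_congr hchi).trans (by simp [hP])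

lemma product_not_nonempty {ι : Type u} [Nonempty ι] {M : Type u} (hM : ¬Nonempty M)
    (U : Ultrafilter ι) : ¬Nonempty ((↑U : Filter ι).Product fun _ : ι => M) := by
  rintro ⟨X⟩
  exact Quotient.inductionOn X fun f => hM ⟨f (Classical.arbitrary ι)⟩

end KeislerAux

/-- A structure `N` is `λ⁺`-saturated (where `λ = |ι|`) when every family, indexed by `ι`, of
`L`-formulas in one free variable with parameters from `N` that is finitely satisfiable in `N`
is realized in `N`. -/
def IsSatUpTo (ι : Type u) (L : FirstOrder.Language.{u, u}) (N : Type u)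
    [L.Structure N] : Prop :=
  ∀ φ : ι → L.Formula (N ⊕ Unit),
    (∀ s : Finset ι, ∃ x : N, ∀ k ∈ s, (φ k).Realize (Sum.elim id fun _ => x)) →
      ∃ x : N, ∀ k : ι, (φ k).Realize (Sum.elim id fun _ => x)

namespace KeislerAux

open FirstOrder.Language

lemma isSatUpTo_of_not_nonempty {ι : Type u} {L : FirstOrder.Language.{u, u}} {N : Type u}
    [L.Structure N] (h : ¬Nonempty N) : IsSatUpTo ι L N := by
  intro φ hfin
  obtain ⟨x, -⟩ := hfin ∅
  exact absurd ⟨x⟩ h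

lemma keisler_dir {ι : Type u} [Infinite ι] (U : Ultrafilter ι)
    (A : ι → Set ι) (hA : ∀ a, A a ∈ U)
    (hreg : ∀ T : Set ι, T.Infinite → (⋂ a ∈ T, A a) = ∅)
    (L : FirstOrder.Language.{u, u})
    (M₀ M₁ : Type u) [L.Structure M₀] [L.Structure M₁] [Nonempty M₀] [Nonempty M₁]
    (heq : M₀ ≅[L] M₁)
    (hsat : IsSatUpTo ι L ((↑U : Filter ι).Product fun _ : ι => M₀)) :
    IsSatUpTo ι L ((↑U : Filter ι).Product fun _ : ι => M₁) := by
  classical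
  haveI : ∀ a : ι, Nonempty ((fun _ : ι => M₀) a) := fun _ => ‹Nonempty M₀›
  haveI : ∀ a : ι, Nonempty ((fun _ : ι => M₁) a) := fun _ => ‹Nonempty M₁›
  set N₁ := (↑U : Filter ι).Product fun _ : ι => M₁ with hN₁
  set N₀ := (↑U : Filter ι).Product fun _ : ι => M₀ with hN₀
  intro φ hfin
  -- representatives
  have hsurj1 : ∀ X : N₁, ∃ x : ι → M₁, (↑x : N₁) = X := fun X =>
    Quotient.inductionOn X fun f => ⟨f, rfl⟩
  have hsurj0 : ∀ X : N₀, ∃ x : ι → M₀, (↑x : N₀) = X := fun X =>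
    Quotient.inductionOn X fun f => ⟨f, rfl⟩
  choose out hout using hsurj1
  -- the finite "relevant index" sets
  have hfinrel : ∀ i : ι, {k : ι | i ∈ A k}.Finite := by
    intro i
    by_contra h
    have h2 := hreg _ h
    have h3 : i ∈ ⋂ a ∈ {k : ι | i ∈ A k}, A a := Set.mem_iInter₂.2 fun k hk => hk
    rw [h2] at h3
    exact h3
  let s : ι → Finset ι := fun i => (hfinrel i).toFinset
  have hs : ∀ i k, k ∈ s i ↔ i ∈ A k := fun i k => (hfinrel i).mem_toFinset
  -- pointwise satisfiability in M₁
  let Sat1 : ι → Finset ι → Prop := fun i t =>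
    ∃ x : M₁, ∀ k ∈ t, (φ k).Realize (Sum.elim (fun a => out a i) fun _ => x)
  -- the pattern formulas and their transfer to M₀
  let Θ : ι → L.Formula N₁ := fun i => patternFormula φ (s i) (Sat1 i)
  have hΘ1 : ∀ i, ∃ v : N₁ → M₁, (Θ i).Realize v := by
    intro i
    refine ⟨fun a => out a i, (realize_patternFormula _ _ _ _).2 fun t ht => Iff.rfl⟩
  have hΘ0 : ∀ i, ∃ v : N₁ → M₀, (Θ i).Realize v := fun i =>
    (exists_realize_iff heq (Θ i)).2 (hΘ1 i)
  choose w hw using hΘ0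
  have hpat : ∀ i, ∀ t ∈ (s i).powerset,
      ((∃ x : M₀, ∀ k ∈ t, (φ k).Realize (Sum.elim (w i) fun _ => x)) ↔ Sat1 i t) := fun i =>
    (realize_patternFormula _ _ _ _).1 (hw i)
  -- the transferred type over N₀
  let G : N₁ → ι → M₀ := fun a i => w i a
  let φ' : ι → L.Formula (N₀ ⊕ Unit) := fun k =>
    (φ k).relabel (Sum.map (fun a => (↑(G a) : N₀)) id)
  -- Łoś-type lemmas
  have los1 : ∀ (k : ι) (x : ι → M₁),
      (φ k).Realize (Sum.elim id fun _ => (↑x : N₁)) ↔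
        ∀ᶠ i in ↑U, (φ k).Realize (Sum.elim (fun a => out a i) fun _ => x i) := by
    intro k x
    have h := Ultraproduct.realize_formula_cast (u := U) (φ k)
      (Sum.elim out (fun _ : Unit => x))
    have e1 : (fun b => (↑(Sum.elim out (fun _ : Unit => x) b) : N₁)) =
        Sum.elim id fun _ => (↑x : N₁) := by
      funext b; cases b with
      | inl a => exact hout a
      | inr u => rfl
    have e2 : ∀ i, (fun b => Sum.elim out (fun _ : Unit => x) b i) =
        Sum.elim (fun a => out a i) fun _ => x i := by
      intro i; funext b; cases b <;> rfl
    rw [e1] at h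
    exact h.trans (Filter.eventually_congr (Filter.Eventually.of_forall fun i =>
      Iff.of_eq (congrArg (fun v => Formula.Realize (φ k) v) (e2 i))))
  have los0 : ∀ (k : ι) (x : ι → M₀),
      (φ' k).Realize (Sum.elim id fun _ => (↑x : N₀)) ↔
        ∀ᶠ i in ↑U, (φ k).Realize (Sum.elim (w i) fun _ => x i) := by
    intro k x
    have h := Ultraproduct.realize_formula_cast (u := U) (φ k)
      (Sum.elim G (fun _ : Unit => x))
    have e1 : (fun b => (↑(Sum.elim G (fun _ : Unit => x) b) : N₀)) =
        (Sum.elim id fun _ => (↑x : N₀)) ∘ Sum.map (fun a => (↑(G a) : N₀)) id := by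
      funext b; cases b <;> rfl
    have e2 : ∀ i, (fun b => Sum.elim G (fun _ : Unit => x) b i) =
        Sum.elim (w i) fun _ => x i := by
      intro i; funext b; cases b <;> rfl
    rw [e1] at h
    rw [Formula.realize_relabel]
    exact h.trans (Filter.eventually_congr (Filter.Eventually.of_forall fun i =>
      Iff.of_eq (congrArg (fun v => Formula.Realize (φ k) v) (e2 i))))
  -- finite satisfiability of the transferred type
  have hfin' : ∀ s' : Finset ι, ∃ X : N₀, ∀ k ∈ s', (φ' k).Realize (Sum.elim id fun _ => X) := by
    intro s'
    obtain ⟨X, hX⟩ := hfin s'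
    have hX' : ∀ k ∈ s', (φ k).Realize (Sum.elim id fun _ => (↑(out X) : N₁)) := by
      intro k hk; rw [hout X]; exact hX k hk
    have hXk : ∀ k ∈ s',
        ∀ᶠ i in ↑U, (φ k).Realize (Sum.elim (fun a => out a i) fun _ => out X i) :=
      fun k hk => (los1 k (out X)).1 (hX' k hk)
    have hD : ∀ᶠ i in ↑U, (∀ k ∈ s',
        (φ k).Realize (Sum.elim (fun a => out a i) fun _ => out X i)) ∧ ∀ k ∈ s', i ∈ A k := by
      refine Filter.Eventually.and ?_ ?_
      · exact (Filter.eventually_all_finset s').2 hXk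
      · exact (Filter.eventually_all_finset s').2 fun k _ => hA k
    have hQ : ∀ i, (∀ k ∈ s',
          (φ k).Realize (Sum.elim (fun a => out a i) fun _ => out X i)) → (∀ k ∈ s', i ∈ A k) →
        ∃ x : M₀, ∀ k ∈ s', (φ k).Realize (Sum.elim (w i) fun _ => x) := by
      intro i h1 h2
      have hsub : s' ⊆ s i := fun k hk => (hs i k).2 (h2 k hk)
      exact (hpat i s' (Finset.mem_powerset.2 hsub)).2 ⟨out X i, h1⟩
    let x0 : ι → M₀ := fun i =>
      if hi : (∀ k ∈ s', (φ k).Realize (Sum.elim (fun a => out a i) fun _ => out X i)) ∧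
          ∀ k ∈ s', i ∈ A k then
        Classical.choose (hQ i hi.1 hi.2)
      else Classical.arbitrary M₀
    refine ⟨(↑x0 : N₀), fun k hk => ?_⟩
    refine (los0 k x0).2 ?_
    filter_upwards [hD] with i hi
    have := Classical.choose_spec (hQ i hi.1 hi.2) k hk
    simpa only [x0, dif_pos hi] using this
  -- realize the transferred type, then come back
  obtain ⟨X0, hX0⟩ := hsat φ' hfin'
  obtain ⟨x0, rfl⟩ := hsurj0 X0
  have hF : ∀ k, ∀ᶠ i in ↑U, (φ k).Realize (Sum.elim (w i) fun _ => x0 i) :=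
    fun k => (los0 k x0).1 (hX0 k)
  let t : ι → Finset ι := fun i =>
    (s i).filter fun k => (φ k).Realize (Sum.elim (w i) fun _ => x0 i)
  have hSat1t : ∀ i, Sat1 i (t i) := by
    intro i
    refine (hpat i (t i) (Finset.mem_powerset.2 (Finset.filter_subset _ _))).1
      ⟨x0 i, fun k hk => (Finset.mem_filter.1 hk).2⟩
  choose y hy using hSat1t
  refine ⟨(↑y : N₁), fun k => ?_⟩
  refine (los1 k y).2 ?_
  have hAk : ∀ᶠ i in ↑U, i ∈ A k := hA k
  filter_upwards [hAk, hF k] with i hi1 hi2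
  exact hy i k (Finset.mem_filter.2 ⟨(hs i k).2 hi1, hi2⟩)

end KeislerAux

/-- Keisler's theorem: if `λ` is an infinite cardinal (here the cardinality of the infinite
index type `ι`), `U` a `λ`-regular ultrafilter on `λ`, and `M₀, M₁` elementarily equivalent
structures in a countable language `L`, then the ultrapower `M₀^λ/U` is `λ⁺`-saturated iff
`M₁^λ/U` is. -/
theorem stmt_12 {ι : Type u} [Infinite ι] (U : Ultrafilter ι)
    (A : ι → Set ι) (hA : ∀ a, A a ∈ U)
    (hreg : ∀ T : Set ι, T.Infinite → (⋂ a ∈ T, A a) = ∅)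
    (L : FirstOrder.Language.{u, u}) (hL : L.card ≤ Cardinal.aleph0)
    (M₀ M₁ : Type u) [L.Structure M₀] [L.Structure M₁]
    (heq : M₀ ≅[L] M₁) :
    IsSatUpTo ι L ((↑U : Filter ι).Product fun _ : ι => M₀) ↔
      IsSatUpTo ι L ((↑U : Filter ι).Product fun _ : ι => M₁) := by
  by_cases hM : Nonempty M₀
  · haveI := hM
    haveI : Nonempty M₁ := heq.nonempty_iff.1 hM
    exact ⟨KeislerAux.keisler_dir U A hA hreg L M₀ M₁ heq,
      KeislerAux.keisler_dir U A hA hreg L M₁ M₀ heq.symm⟩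
  · have hM1 : ¬Nonempty M₁ := fun h => hM (heq.nonempty_iff.2 h)
    constructor <;> intro _
    · exact KeislerAux.isSatUpTo_of_not_nonempty (KeislerAux.product_not_nonempty hM1 U)
    · exact KeislerAux.isSatUpTo_of_not_nonempty (KeislerAux.product_not_nonempty hM U)
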